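/- arXiv:1809.02404 — 3 statements merged into one kernel-verified Lean document; each statement's English description precedes it below -/
import Mathlib

section
/- Let F be a finite group and Σ ⊆ F a generating subset. Then either there exists N ∈ ℕ such that Σ^N = F, or Σ is contained in a single coset of a proper subgroup of F containing the commutator subgroup [F,F]. -/
open Pointwise

private lemma list_prod_mem_pow {F : Type*} [Group F] (T : Set F) :
    ∀ (l : List F), (∀ y ∈ l, y ∈ T) → l.prod ∈ T ^ l.length := by
  intro l
  induction l with
  | nil => intro _; simp [Set.mem_one]
  | cons a l ih =>
      intro h
      rw [List.prod_cons, List.length_cons, pow_succ']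
      exact Set.mul_mem_mul (h a (by simp)) (ih fun y hy => h y (by simp [hy]))

/-- In a finite group, a generating set containing 1 has some power equal to univ. -/
private lemma aux_pow_fills {F : Type*} [Group F] [Finite F] (T : Set F) (h1 : 1 ∈ T)
    (hT : Subgroup.closure T = ⊤) : ∃ N : ℕ, T ^ N = (Set.univ : Set F) := by
  have hcard : 1 ≤ Nat.card F := Nat.card_pos
  set n := Nat.card F with hn
  -- T ∪ T⁻¹ ⊆ T ^ n
  have hsub : T ∪ T⁻¹ ⊆ T ^ n := by
    rintro x (hx | hx)
    · exact Set.pow_subset_pow_right h1 hcard (by simpa [pow_one] using Set.pow_mem_pow (n := 1) hx)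
    · rw [Set.mem_inv] at hx
      have hxinv : x = x⁻¹⁻¹ := by simp
      have : (x⁻¹) ^ (n - 1) = x := by
        have h2 : (x⁻¹) ^ (n - 1) * x⁻¹ = 1 := by
          rw [← pow_succ, Nat.sub_add_cancel hcard, pow_card_eq_one']
        calc (x⁻¹) ^ (n-1) = (x⁻¹) ^ (n-1) * x⁻¹ * x := by group
        _ = x := by rw [h2, one_mul]
      have := Set.pow_mem_pow (n := n - 1) hx
      rw [‹(x⁻¹) ^ (n-1) = x›] at this
      exact Set.pow_subset_pow_right h1 (Nat.sub_le n 1) this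
  -- every element is in some power of T^n
  have h1n : (1 : F) ∈ T ^ n := by
    have := Set.pow_mem_pow (n := n) h1; simpa using this
  have hall : ∀ x : F, ∃ k : ℕ, x ∈ (T ^ n) ^ k := by
    intro x
    have hx : x ∈ Submonoid.closure (T ∪ T⁻¹) := by
      have := Subgroup.closure_toSubmonoid T
      have hx' : x ∈ (Subgroup.closure T).toSubmonoid := by rw [hT]; trivial
      rw [this] at hx'
      exact hx'
    obtain ⟨l, hl, hprod⟩ := Submonoid.exists_list_of_mem_closure hx
    refine ⟨l.length, ?_⟩
    rw [← hprod]
    exact Set.pow_subset_pow_left hsub (list_prod_mem_pow _ l hl)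
  have : ∃ K : ℕ, ∀ x : F, x ∈ (T ^ n) ^ K := by
    have := Fintype.ofFinite F
    classical
    refine ⟨Finset.univ.sup fun x => (hall x).choose, fun x => ?_⟩
    exact Set.pow_subset_pow_right h1n (Finset.le_sup (Finset.mem_univ x)) (hall x).choose_spec
  obtain ⟨K, hK⟩ := this
  exact ⟨n * K, by rw [pow_mul]; exact Set.eq_univ_of_forall hK⟩

/-- For a generating subset `Σ` of a finite group `F`, either some power `Σ^N` is all of `F`,
or `Σ` is contained in a single coset of a proper subgroup of `F` containing `[F,F]`. -/
theorem finite_group_power_fills_or_coset {F : Type*} [Group F] [Finite F] (Sig : Set F)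
    (hgen : Subgroup.closure Sig = ⊤) :
    (∃ N : ℕ, Sig ^ N = (Set.univ : Set F)) ∨
      ∃ (H : Subgroup F) (a : F), H ≠ ⊤ ∧ commutator F ≤ H ∧ Sig ⊆ a • (H : Set F) := by
  rcases Set.eq_empty_or_nonempty Sig with hemp | ⟨s, hs⟩
  · -- empty: group is trivial
    left
    rw [hemp, Subgroup.closure_empty] at hgen
    have hsub : Subsingleton F := by
      constructor; intro a b
      have ha : a ∈ (⊥ : Subgroup F) := hgen ▸ Subgroup.mem_top a
      have hb : b ∈ (⊥ : Subgroup F) := hgen ▸ Subgroup.mem_top b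
      rw [Subgroup.mem_bot] at ha hb; rw [ha, hb]
    refine ⟨0, ?_⟩
    rw [pow_zero]
    apply Set.eq_univ_of_forall
    intro x
    have : x = 1 := Subsingleton.elim x 1
    simp [this, Set.mem_one]
  · set H : Subgroup F := Subgroup.closure (s⁻¹ • Sig) ⊔ commutator F with hH
    by_cases htop : H = ⊤
    · -- power fills
      left
      have hcard : 1 ≤ Nat.card F := Nat.card_pos
      set n := Nat.card F with hn
      set T : Set F := Sig ^ n with hT
      set C : Subgroup F := Subgroup.closure T with hC
      have hsinv : s ^ (n - 1) = s⁻¹ := by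
        have h2 : s ^ (n - 1) * s = 1 := by
          rw [← pow_succ, Nat.sub_add_cancel hcard, pow_card_eq_one']
        exact eq_inv_of_mul_eq_one_left h2
      -- s⁻¹ • Sig ⊆ T
      have hdiff : ∀ t ∈ Sig, s⁻¹ * t ∈ T := by
        intro t ht
        have : s ^ (n - 1) * t ∈ Sig ^ (n - 1) * Sig :=
          Set.mul_mem_mul (Set.pow_mem_pow (n := n - 1) hs) ht
        rw [hsinv] at this
        rwa [← pow_succ, Nat.sub_add_cancel hcard] at this
      have hTC : T ⊆ (C : Set F) := Subgroup.subset_closure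
      have h2n : Sig ^ (2 * n) ⊆ (C : Set F) := by
        rw [two_mul, pow_add]
        rintro x ⟨a, ha, b, hb, rfl⟩
        exact mul_mem (hTC ha) (hTC hb)
      -- conjugation stability
      have hconj : ∀ t ∈ Sig, ∀ x ∈ T, t * x * t⁻¹ ∈ (C : Set F) := by
        intro t ht x hx
        have h1 : t * x * t ^ (n - 1) ∈ Sig ^ 1 * Sig ^ n * Sig ^ (n - 1) :=
          Set.mul_mem_mul (Set.mul_mem_mul (by simpa using ht) hx) (Set.pow_mem_pow (n := n - 1) ht)
        have htinv : t ^ (n - 1) = t⁻¹ := by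
          have h2 : t ^ (n - 1) * t = 1 := by
            rw [← pow_succ, Nat.sub_add_cancel hcard, pow_card_eq_one']
          exact eq_inv_of_mul_eq_one_left h2
        rw [htinv] at h1
        have heq : Sig ^ 1 * Sig ^ n * Sig ^ (n - 1) = Sig ^ (2 * n) := by
          rw [← pow_add, ← pow_add]
          congr 1
          omega
        rw [heq] at h1
        exact h2n h1
      have hconj' : ∀ t ∈ Sig, ∀ x ∈ T, t⁻¹ * x * t ∈ (C : Set F) := by
        intro t ht x hx
        have htinv : t ^ (n - 1) = t⁻¹ := by
          have h2 : t ^ (n - 1) * t = 1 := by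
            rw [← pow_succ, Nat.sub_add_cancel hcard, pow_card_eq_one']
          exact eq_inv_of_mul_eq_one_left h2
        have h1 : t ^ (n - 1) * x * t ∈ Sig ^ (n - 1) * Sig ^ n * Sig ^ 1 :=
          Set.mul_mem_mul (Set.mul_mem_mul (Set.pow_mem_pow (n := n - 1) ht) hx) (by simpa using ht)
        rw [htinv] at h1
        have heq : Sig ^ (n - 1) * Sig ^ n * Sig ^ 1 = Sig ^ (2 * n) := by
          rw [← pow_add, ← pow_add]
          congr 1
          omega
        rw [heq] at h1
        exact h2n h1
      -- C is normal
      have hconjC : ∀ t ∈ Sig, ∀ c ∈ C, t * c * t⁻¹ ∈ C := by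
        intro t ht c hc
        induction hc using Subgroup.closure_induction with
        | mem x hx => exact hconj t ht x hx
        | one => simpa using one_mem C
        | mul a b _ _ iha ihb =>
            have : t * (a * b) * t⁻¹ = (t * a * t⁻¹) * (t * b * t⁻¹) := by group
            rw [this]; exact mul_mem iha ihb
        | inv a _ iha =>
            have : t * a⁻¹ * t⁻¹ = (t * a * t⁻¹)⁻¹ := by group
            rw [this]; exact inv_mem iha
      have hconjC' : ∀ t ∈ Sig, ∀ c ∈ C, t⁻¹ * c * t ∈ C := by
        intro t ht c hc
        induction hc using Subgroup.closure_induction with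
        | mem x hx => exact hconj' t ht x hx
        | one => simpa using one_mem C
        | mul a b _ _ iha ihb =>
            have : t⁻¹ * (a * b) * t = (t⁻¹ * a * t) * (t⁻¹ * b * t) := by group
            rw [this]; exact mul_mem iha ihb
        | inv a _ iha =>
            have : t⁻¹ * a⁻¹ * t = (t⁻¹ * a * t)⁻¹ := by group
            rw [this]; exact inv_mem iha
      have hnorm : C.Normal := by
        rw [← Subgroup.normalizer_eq_top_iff]
        rw [eq_top_iff, ← hgen]
        rw [Subgroup.closure_le]
        intro t ht
        rw [SetLike.mem_coe, Subgroup.mem_normalizer_iff]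
        intro h
        constructor
        · exact fun hh => hconjC t ht h hh
        · intro hh
          have := hconjC' t ht _ hh
          have heq : t⁻¹ * (t * h * t⁻¹) * t = h := by group
          rwa [heq] at this
      -- the quotient is cyclic, so commutator ≤ C
      have hcomm : commutator F ≤ C := by
        rw [commutator_def, Subgroup.commutator_le]
        intro g _ h _
        let π := QuotientGroup.mk' C
        have hπ : ∀ t ∈ Sig, π t = π s := by
          intro t ht
          rw [QuotientGroup.mk'_eq_mk']
          refine ⟨t⁻¹ * s, ?_, by group⟩
          have h1 : s⁻¹ * t ∈ C := hTC (hdiff t ht)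
          simpa [mul_inv_rev] using C.inv_mem h1
        have hgen2 : Subgroup.closure (π '' Sig) = ⊤ := by
          rw [← MonoidHom.map_closure, hgen]
          exact Subgroup.map_top_of_surjective π (QuotientGroup.mk'_surjective C)
        have hsub2 : π '' Sig ⊆ ({π s} : Set (F ⧸ C)) := by
          rintro _ ⟨t, ht, rfl⟩
          simp [hπ t ht]
        have hcyc : (⊤ : Subgroup (F ⧸ C)) ≤ Subgroup.closure {π s} := by
          rw [← hgen2]
          exact Subgroup.closure_mono hsub2
        have hcomm2 : ∀ a b : F ⧸ C, a * b = b * a := by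
          intro a b
          obtain ⟨k, hk⟩ := Subgroup.mem_closure_singleton.mp (hcyc (Subgroup.mem_top a))
          obtain ⟨m, hm⟩ := Subgroup.mem_closure_singleton.mp (hcyc (Subgroup.mem_top b))
          rw [← hk, ← hm, ← zpow_add, ← zpow_add, add_comm]
        open scoped commutatorElement in
        have : π ⁅g, h⁆ = 1 := by
          rw [commutatorElement_def]
          simp only [map_mul, map_inv]
          rw [hcomm2 (π g) (π h)]
          group
        rwa [← QuotientGroup.ker_mk' C, MonoidHom.mem_ker]
      -- closure T = ⊤
      have hCtop : C = ⊤ := by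
        rw [eq_top_iff, ← htop, hH]
        apply sup_le _ hcomm
        rw [Subgroup.closure_le]
        rintro _ ⟨t, ht, rfl⟩
        show s⁻¹ • t ∈ (C : Set F)
        rw [smul_eq_mul]
        exact hTC (hdiff t ht)
      have h1T : (1 : F) ∈ T := by
        have := Set.pow_mem_pow (n := n) hs
        rwa [pow_card_eq_one'] at this
      obtain ⟨M, hM⟩ := aux_pow_fills T h1T hCtop
      exact ⟨n * M, by rw [pow_mul]; exact hM⟩
    · -- coset branch
      right
      refine ⟨H, s, htop, le_sup_right, fun t ht => ?_⟩
      rw [Set.mem_smul_set_iff_inv_smul_mem]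
      have : s⁻¹ * t ∈ s⁻¹ • Sig := Set.smul_mem_smul_set ht
      have h1 : s⁻¹ * t ∈ Subgroup.closure (s⁻¹ • Sig) := Subgroup.subset_closure this
      exact (le_sup_left : Subgroup.closure (s⁻¹ • Sig) ≤ H) h1
end

section
/- Let g = diag(μ₁,…,μ_d) ∈ GL_d(ℝ) be a diagonal matrix with max_{i>1}|μ_i| ≤ (1−2η)|μ₁| for some η ∈ (0,1), and let ε > 0 be small enough that (1−2η)/(1−ε²) < 1 − (3/2)η. Then for all [x],[y] in the ball B([e₁],ε) ⊂ ℙ(ℝ^d) (in the standard metric), d(g[x], g[y]) ≤ (1 − (3/2)η) · d([x],[y]). -/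
open Matrix

/-- The standard metric on projective space, on nonzero representative vectors. -/
noncomputable def projDist {V : Type*} [NormedAddCommGroup V] [InnerProductSpace ℝ V]
    (x y : V) : ℝ :=
  Real.sqrt (‖x‖ ^ 2 * ‖y‖ ^ 2 - (inner ℝ x y : ℝ) ^ 2) / (‖x‖ * ‖y‖)

/-- Action of a matrix on Euclidean space. -/
noncomputable def mulVecE {d : ℕ} (g : Matrix (Fin d) (Fin d) ℝ)
    (x : EuclideanSpace ℝ (Fin d)) : EuclideanSpace ℝ (Fin d) :=
  (WithLp.equiv 2 (Fin d → ℝ)).symm (g *ᵥ (WithLp.equiv 2 (Fin d → ℝ)) x)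

/-- The line `[e₁]` of the first standard basis vector, in Euclidean space. -/
noncomputable def e₁ (d : ℕ) [NeZero d] : EuclideanSpace ℝ (Fin d) :=
  EuclideanSpace.single (0 : Fin d) (1 : ℝ)

lemma normSqE {d : ℕ} (z : EuclideanSpace ℝ (Fin d)) : ‖z‖ ^ 2 = ∑ i, (z i) ^ 2 := by
  rw [EuclideanSpace.norm_eq, Real.sq_sqrt (by positivity)]
  simp [sq_abs]

lemma innerE {d : ℕ} (z w : EuclideanSpace ℝ (Fin d)) : (inner ℝ z w : ℝ) = ∑ i, z i * w i := by
  rw [PiLp.inner_apply]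
  simp [RCLike.inner_apply, mul_comm]

lemma mulVecE_apply {d : ℕ} (μ : Fin d → ℝ) (x : EuclideanSpace ℝ (Fin d)) (i : Fin d) :
    (mulVecE (Matrix.diagonal μ) x) i = μ i * x i := by
  simp [mulVecE, Matrix.mulVec_diagonal]

/-- Lagrange identity. -/
lemma lagrangeE {d : ℕ} (x y : Fin d → ℝ) :
    ∑ i, ∑ j, (x i * y j - x j * y i) ^ 2
      = 2 * ((∑ i, x i ^ 2) * (∑ i, y i ^ 2)) - 2 * (∑ i, x i * y i) ^ 2 := by
  have h : ∀ i j : Fin d, (x i * y j - x j * y i) ^ 2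
      = x i ^ 2 * y j ^ 2 + x j ^ 2 * y i ^ 2 - 2 * ((x i * y i) * (x j * y j)) := by
    intros; ring
  have e1 : ∑ i : Fin d, ∑ j : Fin d, x i ^ 2 * y j ^ 2 = (∑ i, x i ^ 2) * (∑ i, y i ^ 2) :=
    (Finset.sum_mul_sum _ _ _ _).symm
  have e2 : ∑ i : Fin d, ∑ j : Fin d, x j ^ 2 * y i ^ 2 = (∑ i, x i ^ 2) * (∑ i, y i ^ 2) := by
    rw [Finset.sum_comm]; exact (Finset.sum_mul_sum _ _ _ _).symm
  have e3 : ∑ i : Fin d, ∑ j : Fin d, 2 * ((x i * y i) * (x j * y j))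
      = 2 * (∑ i, x i * y i) ^ 2 := by
    simp_rw [← Finset.mul_sum, ← Finset.sum_mul]
    rw [sq]
  simp_rw [h, Finset.sum_sub_distrib, Finset.sum_add_distrib]
  rw [e1, e2, e3]; ring

/-- The Gram determinant as half a sum of squares. -/
lemma gramE {d : ℕ} (x y : EuclideanSpace ℝ (Fin d)) :
    ‖x‖ ^ 2 * ‖y‖ ^ 2 - (inner ℝ x y : ℝ) ^ 2
      = (1 / 2) * ∑ i, ∑ j, (x i * y j - x j * y i) ^ 2 := by
  rw [lagrangeE, normSqE, normSqE, innerE]; ring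

lemma gramE_nonneg {d : ℕ} (x y : EuclideanSpace ℝ (Fin d)) :
    0 ≤ ‖x‖ ^ 2 * ‖y‖ ^ 2 - (inner ℝ x y : ℝ) ^ 2 := by
  rw [gramE]
  positivity

/-- In dimension 1 the projective distance vanishes. -/
lemma projDist_dim_one (x y : EuclideanSpace ℝ (Fin 1)) : projDist x y = 0 := by
  have h : ‖x‖ ^ 2 * ‖y‖ ^ 2 - (inner ℝ x y : ℝ) ^ 2 = 0 := by
    rw [normSqE, normSqE, innerE]
    simp [Fin.sum_univ_one]
    ring
  rw [projDist, h, Real.sqrt_zero, zero_div]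

lemma ball_bound {d : ℕ} [NeZero d] {ε : ℝ} (hε0 : 0 < ε)
    {x : EuclideanSpace ℝ (Fin d)} (hx : x ≠ 0) (h : projDist x (e₁ d) ≤ ε) :
    (1 - ε ^ 2) * ‖x‖ ^ 2 ≤ (x 0) ^ 2 := by
  have hxn : 0 < ‖x‖ := norm_pos_iff.mpr hx
  have hne : ‖(e₁ d)‖ = 1 := by simp [e₁, EuclideanSpace.norm_single]
  have hie : (inner ℝ x (e₁ d) : ℝ) = x 0 := by
    simp [e₁, innerE]
  have hA : 0 ≤ ‖x‖ ^ 2 - (x 0) ^ 2 := by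
    rw [normSqE]
    have h0 : (x 0) ^ 2 ≤ ∑ i, (x i) ^ 2 := by
      have := Finset.single_le_sum (f := fun i => (x i) ^ 2)
        (fun i _ => sq_nonneg (x i)) (Finset.mem_univ (0 : Fin d))
      simpa using this
    linarith
  rw [projDist, hne, hie] at h
  have h1 : Real.sqrt (‖x‖ ^ 2 * 1 ^ 2 - (x 0) ^ 2) ≤ ε * (‖x‖ * 1) := by
    rw [div_le_iff₀ (by positivity)] at h
    exact h
  have h2 : ‖x‖ ^ 2 * 1 ^ 2 - (x 0) ^ 2 ≤ (ε * (‖x‖ * 1)) ^ 2 := by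
    have := Real.sq_sqrt (by simpa using hA : (0:ℝ) ≤ ‖x‖ ^ 2 * 1 ^ 2 - (x 0) ^ 2)
    nlinarith [Real.sqrt_nonneg (‖x‖ ^ 2 * 1 ^ 2 - (x 0) ^ 2)]
  nlinarith

/-- A diagonal matrix `g = diag(μ₁,…,μ_d)` with `max_{i>1}|μᵢ| ≤ (1−2η)|μ₁|` contracts the
`ε`-ball around `[e₁]` in projective space with ratio `1 − (3/2)η`, provided
`(1−2η)/(1−ε²) < 1 − (3/2)η`. -/
theorem diagonal_contracts_ball {d : ℕ} [NeZero d] (μ : Fin d → ℝ)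
    (hinv : ∀ i, μ i ≠ 0) (η : ℝ) (hη0 : 0 < η) (hη1 : η < 1)
    (hμ : ∀ i : Fin d, i ≠ 0 → |μ i| ≤ (1 - 2 * η) * |μ 0|)
    (ε : ℝ) (hε0 : 0 < ε) (hε1 : ε < 1)
    (hsmall : (1 - 2 * η) / (1 - ε ^ 2) < 1 - (3 / 2) * η) :
    ∀ x : EuclideanSpace ℝ (Fin d), x ≠ 0 → projDist x (e₁ d) ≤ ε →
    ∀ y : EuclideanSpace ℝ (Fin d), y ≠ 0 → projDist y (e₁ d) ≤ ε →
      projDist (mulVecE (Matrix.diagonal μ) x) (mulVecE (Matrix.diagonal μ) y) ≤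
        (1 - (3 / 2) * η) * projDist x y := by
  intro x hx hxε y hy hyε
  by_cases hc : 0 ≤ 1 - 2 * η
  swap
  · -- 1 - 2η < 0 : forces d = 1
    push_neg at hc
    rcases Nat.lt_or_ge d 2 with hd | hd
    · have hd1 : d = 1 := by
        have := NeZero.ne d
        omega
      subst hd1
      rw [projDist_dim_one, projDist_dim_one]
      simp
    · have h1 : (⟨1, by omega⟩ : Fin d) ≠ 0 := by simp [Fin.ext_iff]
      have h2 := hμ _ h1
      have h3 := abs_pos.mpr (hinv (⟨1, by omega⟩ : Fin d))
      nlinarith [abs_nonneg (μ 0)]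
  -- main case
  set g := Matrix.diagonal μ with hg
  set gx := mulVecE g x with hgx
  set gy := mulVecE g y with hgy
  have hgxa : ∀ i, gx i = μ i * x i := fun i => mulVecE_apply μ x i
  have hgya : ∀ i, gy i = μ i * y i := fun i => mulVecE_apply μ y i
  have hμ0 : μ 0 ≠ 0 := hinv 0
  have hμ0sq : 0 < (μ 0) ^ 2 := by positivity
  have hε2 : 0 < 1 - ε ^ 2 := by nlinarith
  set C := (1 - 2 * η) * (μ 0) ^ 2 with hC
  have hCnn : 0 ≤ C := by positivity
  set K := 1 - (3 / 2) * η with hK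
  have hK0 : 0 < K := lt_of_le_of_lt (by positivity) hsmall
  -- pairwise bound on μ i * μ j
  have hpair : ∀ i j : Fin d, i ≠ j → (μ i * μ j) ^ 2 ≤ C ^ 2 := by
    intro i j hij
    have habs : |μ i| * |μ j| ≤ C := by
      rw [hC]
      rcases eq_or_ne i 0 with rfl | hi
      · have hj := hμ j (Ne.symm hij)
        nlinarith [abs_nonneg (μ 0), abs_nonneg (μ j), sq_abs (μ 0)]
      · rcases eq_or_ne j 0 with rfl | hjz
        · have hi' := hμ i hi
          nlinarith [abs_nonneg (μ 0), abs_nonneg (μ i), sq_abs (μ 0)]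
        · have h1 := hμ i hi
          have h2 := hμ j hjz
          have h3 : |μ i| * |μ j| ≤ ((1 - 2 * η) * |μ 0|) * ((1 - 2 * η) * |μ 0|) :=
            mul_le_mul h1 h2 (abs_nonneg _) (mul_nonneg hc (abs_nonneg _))
          have h4 : |μ 0| * |μ 0| = μ 0 ^ 2 := by rw [← abs_mul, abs_mul_self, sq]
          nlinarith [mul_nonneg (mul_nonneg hc hη0.le) (sq_nonneg (μ 0))]
    calc (μ i * μ j) ^ 2 = (|μ i| * |μ j|) ^ 2 := by rw [← abs_mul, sq_abs]
      _ ≤ C ^ 2 := pow_le_pow_left₀ (mul_nonneg (abs_nonneg _) (abs_nonneg _)) habs 2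
  -- Gram bounds
  set G := ‖x‖ ^ 2 * ‖y‖ ^ 2 - (inner ℝ x y : ℝ) ^ 2 with hGdef
  set G' := ‖gx‖ ^ 2 * ‖gy‖ ^ 2 - (inner ℝ gx gy : ℝ) ^ 2 with hG'def
  have hGnn : 0 ≤ G := gramE_nonneg x y
  have hG'nn : 0 ≤ G' := gramE_nonneg gx gy
  have hGbound : G' ≤ C ^ 2 * G := by
    have hsum : ∑ i, ∑ j, (gx i * gy j - gx j * gy i) ^ 2
        ≤ C ^ 2 * ∑ i, ∑ j, (x i * y j - x j * y i) ^ 2 := by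
      rw [Finset.mul_sum]
      apply Finset.sum_le_sum
      intro i _
      rw [Finset.mul_sum]
      apply Finset.sum_le_sum
      intro j _
      rcases eq_or_ne i j with rfl | hij
      · simp
      · have heq : gx i * gy j - gx j * gy i = (μ i * μ j) * (x i * y j - x j * y i) := by
          rw [hgxa, hgya, hgxa, hgya]; ring
        rw [heq, mul_pow]
        exact mul_le_mul_of_nonneg_right (hpair i j hij) (sq_nonneg _)
    rw [hGdef, hG'def, gramE, gramE]
    linarith
  -- denominator bounds
  have hdenom : ∀ (z : EuclideanSpace ℝ (Fin d)), z ≠ 0 → projDist z (e₁ d) ≤ ε →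
      (1 - ε ^ 2) * (μ 0) ^ 2 * ‖z‖ ^ 2 ≤ ‖mulVecE g z‖ ^ 2 := by
    intro z hz hzε
    have hb := ball_bound hε0 hz hzε
    have h1 : ‖mulVecE g z‖ ^ 2 = ∑ i, (μ i * z i) ^ 2 := by
      rw [normSqE]; exact Finset.sum_congr rfl fun i _ => by rw [mulVecE_apply]
    have h2 : (μ 0 * z 0) ^ 2 ≤ ∑ i, (μ i * z i) ^ 2 :=
      Finset.single_le_sum (f := fun i => (μ i * z i) ^ 2)
        (fun i _ => sq_nonneg _) (Finset.mem_univ 0)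
    rw [h1]
    have h3 := mul_le_mul_of_nonneg_left hb (sq_nonneg (μ 0))
    have h4 : (μ 0 * z 0) ^ 2 = μ 0 ^ 2 * (z 0) ^ 2 := by ring
    linarith
  have hdx := hdenom x hx hxε
  have hdy := hdenom y hy hyε
  have hxn : 0 < ‖x‖ := norm_pos_iff.mpr hx
  have hyn : 0 < ‖y‖ := norm_pos_iff.mpr hy
  have hgxn : 0 < ‖gx‖ ^ 2 := lt_of_lt_of_le (by positivity) hdx
  have hgyn : 0 < ‖gy‖ ^ 2 := lt_of_lt_of_le (by positivity) hdy
  -- assemble via squares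
  have hLnn : 0 ≤ projDist gx gy := div_nonneg (Real.sqrt_nonneg _) (by positivity)
  have hRnn : 0 ≤ K * projDist x y :=
    mul_nonneg hK0.le (div_nonneg (Real.sqrt_nonneg _) (by positivity))
  rw [← Real.sqrt_sq hLnn, ← Real.sqrt_sq hRnn]
  apply Real.sqrt_le_sqrt
  have hLsq : (projDist gx gy) ^ 2 = G' / (‖gx‖ ^ 2 * ‖gy‖ ^ 2) := by
    rw [projDist, div_pow, mul_pow, Real.sq_sqrt hG'nn]
  have hRsq : (K * projDist x y) ^ 2 = K ^ 2 * (G / (‖x‖ ^ 2 * ‖y‖ ^ 2)) := by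
    rw [projDist, mul_pow, div_pow, mul_pow, Real.sq_sqrt hGnn]
  rw [hLsq, hRsq]
  have step1 : G' / (‖gx‖ ^ 2 * ‖gy‖ ^ 2)
      ≤ (C ^ 2 * G) / ((1 - ε ^ 2) * (μ 0) ^ 2 * ‖x‖ ^ 2 * ((1 - ε ^ 2) * (μ 0) ^ 2 * ‖y‖ ^ 2)) := by
    apply div_le_div₀ (mul_nonneg (sq_nonneg C) hGnn) hGbound (by positivity)
    exact mul_le_mul hdx hdy (by positivity) (le_of_lt hgxn)
  have step2 : (C ^ 2 * G) / ((1 - ε ^ 2) * (μ 0) ^ 2 * ‖x‖ ^ 2 * ((1 - ε ^ 2) * (μ 0) ^ 2 * ‖y‖ ^ 2))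
      = ((1 - 2 * η) / (1 - ε ^ 2)) ^ 2 * (G / (‖x‖ ^ 2 * ‖y‖ ^ 2)) := by
    rw [hC]
    field_simp
  have step3 : ((1 - 2 * η) / (1 - ε ^ 2)) ^ 2 * (G / (‖x‖ ^ 2 * ‖y‖ ^ 2))
      ≤ K ^ 2 * (G / (‖x‖ ^ 2 * ‖y‖ ^ 2)) := by
    apply mul_le_mul_of_nonneg_right _ (div_nonneg hGnn (by positivity))
    exact pow_le_pow_left₀ (by positivity) hsmall.le 2
  calc G' / (‖gx‖ ^ 2 * ‖gy‖ ^ 2) ≤ _ := step1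
    _ = _ := step2
    _ ≤ _ := step3
end

section
/- Let a = [[1,1],[0,1]] and b = [[1,0],[1,1]] in SL₂(ℝ), and for p ∈ (0,1) let μ_p = p·δ_a + (1−p)·δ_b. Let λ₁(μ_p) = lim_{n→∞} (1/n)·E[log‖X_n⋯X_1‖] be the top Lyapunov exponent of i.i.d. products with law μ_p. Then λ₁(μ_p) → 0 as p → 1⁻. -/
open Matrix

/-- `a = [[1,1],[0,1]]`. -/
noncomputable def aMat : Matrix (Fin 2) (Fin 2) ℝ := !![1, 1; 0, 1]

/-- `b = [[1,0],[1,1]]`. -/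
noncomputable def bMat : Matrix (Fin 2) (Fin 2) ℝ := !![1, 0; 1, 1]

/-- The operator (Euclidean) norm of a real matrix. -/
noncomputable def opNorm {d : ℕ} (g : Matrix (Fin d) (Fin d) ℝ) : ℝ :=
  ‖Matrix.toEuclideanCLM (𝕜 := ℝ) g‖

/-- The expectation `E[log ‖X_n ⋯ X_1‖]` for i.i.d. matrices with law
`μ_p = p δ_a + (1−p) δ_b`, written as a finite sum over words of length `n`
(`false ↦ a` with probability `p`, `true ↦ b` with probability `1−p`). -/
noncomputable def expLogNorm (n : ℕ) (p : ℝ) : ℝ :=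
  ∑ w : Fin n → Bool,
    (∏ i : Fin n, (if w i then 1 - p else p)) *
      Real.log (opNorm (((List.ofFn w).map (fun c => if c then bMat else aMat)).prod))

namespace LyapAux

open Filter

noncomputable def wp (l : List Bool) : Matrix (Fin 2) (Fin 2) ℝ :=
  (l.map (fun c => if c then bMat else aMat)).prod

lemma wp_append (l1 l2 : List Bool) : wp (l1 ++ l2) = wp l1 * wp l2 := by
  simp [wp]

lemma wp_entries (l : List Bool) :
    (∀ i j, 0 ≤ wp l i j) ∧ 1 ≤ wp l 0 0 ∧ 1 ≤ wp l 1 1 := by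
  induction l with
  | nil =>
    refine ⟨fun i j => ?_, ?_, ?_⟩
    · simp only [wp, List.map_nil, List.prod_nil, Matrix.one_apply]
      split <;> norm_num
    · simp [wp, Matrix.one_apply]
    · simp [wp, Matrix.one_apply]
  | cons c l ih =>
    obtain ⟨h0, h00, h11⟩ := ih
    have hc : wp (c :: l) = (if c then bMat else aMat) * wp l := by simp [wp]
    cases c
    all_goals
      first
        | (have hc' : wp (false :: l) = aMat * wp l := by simp [wp]
           rw [hc'])
        | (have hc' : wp (true :: l) = bMat * wp l := by simp [wp]
           rw [hc'])
    all_goals refine ⟨fun i j => ?_, ?_, ?_⟩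
    · fin_cases i <;> fin_cases j <;>
        simp [aMat, Matrix.mul_apply, Fin.sum_univ_two] <;>
        nlinarith [h0 0 0, h0 0 1, h0 1 0, h0 1 1]
    · simp [aMat, Matrix.mul_apply, Fin.sum_univ_two]
      nlinarith [h0 0 0, h0 0 1, h0 1 0, h0 1 1]
    · simp [aMat, Matrix.mul_apply, Fin.sum_univ_two]
      nlinarith [h0 0 0, h0 0 1, h0 1 0, h0 1 1]
    · fin_cases i <;> fin_cases j <;>
        simp [bMat, Matrix.mul_apply, Fin.sum_univ_two] <;>
        nlinarith [h0 0 0, h0 0 1, h0 1 0, h0 1 1]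
    · simp [bMat, Matrix.mul_apply, Fin.sum_univ_two]
      nlinarith [h0 0 0, h0 0 1, h0 1 0, h0 1 1]
    · simp [bMat, Matrix.mul_apply, Fin.sum_univ_two]
      nlinarith [h0 0 0, h0 0 1, h0 1 0, h0 1 1]

lemma coord_apply (g : Matrix (Fin 2) (Fin 2) ℝ) (x : EuclideanSpace ℝ (Fin 2)) (i : Fin 2) :
    (Matrix.toEuclideanCLM (𝕜 := ℝ) g x) i = g i 0 * x 0 + g i 1 * x 1 := by
  change (WithLp.equiv 2 (Fin 2 → ℝ) (Matrix.toEuclideanCLM (𝕜 := ℝ) g x)) i = _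
  rw [show (WithLp.equiv 2 (Fin 2 → ℝ) (Matrix.toEuclideanCLM (𝕜 := ℝ) g x)) = g *ᵥ WithLp.ofLp x from Matrix.ofLp_toEuclideanCLM g x]
  simp [Matrix.toLin'_apply, Matrix.mulVec, dotProduct, Fin.sum_univ_two]

lemma norm_sq (x : EuclideanSpace ℝ (Fin 2)) :
    ‖x‖ = Real.sqrt (x 0 ^ 2 + x 1 ^ 2) := by
  rw [EuclideanSpace.norm_eq]
  simp [Fin.sum_univ_two, Real.norm_eq_abs, sq_abs]

lemma le_opNorm_00 (g : Matrix (Fin 2) (Fin 2) ℝ) (h0 : 0 ≤ g 0 0) : g 0 0 ≤ opNorm g := by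
  set e0 : EuclideanSpace ℝ (Fin 2) := EuclideanSpace.single 0 1 with he0
  have he : ‖e0‖ = 1 := by simp [he0, EuclideanSpace.norm_single]
  have h1 : ‖Matrix.toEuclideanCLM (𝕜 := ℝ) g e0‖ ≤ opNorm g := by
    have := (Matrix.toEuclideanCLM (𝕜 := ℝ) g).le_opNorm e0
    rwa [he, mul_one] at this
  refine le_trans ?_ h1
  rw [norm_sq]
  have c0 : (Matrix.toEuclideanCLM (𝕜 := ℝ) g e0) 0 = g 0 0 := by
    rw [coord_apply]; simp [he0, EuclideanSpace.single_apply]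
  have c1 : (Matrix.toEuclideanCLM (𝕜 := ℝ) g e0) 1 = g 1 0 := by
    rw [coord_apply]; simp [he0, EuclideanSpace.single_apply]
  rw [c0, c1]
  calc g 0 0 = Real.sqrt ((g 0 0) ^ 2) := by rw [Real.sqrt_sq h0]
    _ ≤ _ := Real.sqrt_le_sqrt (by nlinarith [sq_nonneg (g 1 0)])

lemma one_le_opNorm_wp (l : List Bool) : 1 ≤ opNorm (wp l) :=
  le_trans (wp_entries l).2.1 (le_opNorm_00 _ (le_trans zero_le_one (wp_entries l).2.1))

lemma opNorm_wp_pos (l : List Bool) : 0 < opNorm (wp l) :=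
  lt_of_lt_of_le one_pos (one_le_opNorm_wp l)

lemma log_wp_nonneg (l : List Bool) : 0 ≤ Real.log (opNorm (wp l)) :=
  Real.log_nonneg (one_le_opNorm_wp l)

lemma opNorm_mul_le (g h : Matrix (Fin 2) (Fin 2) ℝ) :
    opNorm (g * h) ≤ opNorm g * opNorm h := by
  unfold opNorm
  rw [_root_.map_mul]
  exact norm_mul_le _ _

lemma weight_sum (n : ℕ) (p : ℝ) :
    ∑ w : Fin n → Bool, ∏ i, (if w i then 1 - p else p) = 1 := by
  rw [← Fintype.prod_sum (fun (_ : Fin n) (b : Bool) => if b then 1 - p else p)]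
  simp

lemma weight_nonneg {n : ℕ} {p : ℝ} (h0 : 0 ≤ p) (h1 : p ≤ 1) (w : Fin n → Bool) :
    0 ≤ ∏ i, (if w i then 1 - p else p) := by
  apply Finset.prod_nonneg
  intro i _
  cases w i <;> simp <;> linarith

lemma expLogNorm_eq (n : ℕ) (p : ℝ) :
    expLogNorm n p = ∑ w : Fin n → Bool,
      (∏ i : Fin n, (if w i then 1 - p else p)) * Real.log (opNorm (wp (List.ofFn w))) := rfl

lemma expLogNorm_nonneg (n : ℕ) {p : ℝ} (h0 : 0 ≤ p) (h1 : p ≤ 1) :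
    0 ≤ expLogNorm n p := by
  rw [expLogNorm_eq]
  apply Finset.sum_nonneg
  intro w _
  exact mul_nonneg (weight_nonneg h0 h1 w) (log_wp_nonneg _)

lemma sum_mul_add {α β : Type*} [Fintype α] [Fintype β] (f : α → ℝ) (g : β → ℝ)
    (F : α → ℝ) (G : β → ℝ) (hf : ∑ a, f a = 1) (hg : ∑ b, g b = 1) :
    ∑ a, ∑ b, (f a * g b) * (F a + G b) = ∑ a, f a * F a + ∑ b, g b * G b := by
  have inner : ∀ a, ∑ b, (f a * g b) * (F a + G b)
      = (f a * F a) * (∑ b, g b) + f a * (∑ b, g b * G b) := by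
    intro a
    rw [Finset.mul_sum, Finset.mul_sum, ← Finset.sum_add_distrib]
    refine Finset.sum_congr rfl fun b _ => ?_
    ring
  simp_rw [inner, hg, mul_one]
  rw [Finset.sum_add_distrib, ← Finset.sum_mul, hf, one_mul]

lemma expLogNorm_add (m n : ℕ) {p : ℝ} (h0 : 0 ≤ p) (h1 : p ≤ 1) :
    expLogNorm (m + n) p ≤ expLogNorm m p + expLogNorm n p := by
  classical
  have key : expLogNorm (m + n) p =
      ∑ u : Fin m → Bool, ∑ v : Fin n → Bool,
        ((∏ i : Fin m, (if u i then 1 - p else p)) * (∏ i : Fin n, (if v i then 1 - p else p))) *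
          Real.log (opNorm (wp (List.ofFn u) * wp (List.ofFn v))) := by
    rw [expLogNorm_eq, ← Equiv.sum_comp (Fin.appendEquiv m n), Fintype.sum_prod_type]
    refine Finset.sum_congr rfl fun u _ => Finset.sum_congr rfl fun v _ => ?_
    have hofn : List.ofFn (Fin.appendEquiv m n (u, v)) = List.ofFn u ++ List.ofFn v := by
      simp [Fin.appendEquiv]
    have hw : (∏ i : Fin (m + n), (if (Fin.appendEquiv m n (u, v)) i then 1 - p else p))
        = (∏ i : Fin m, (if u i then 1 - p else p)) *
            (∏ i : Fin n, (if v i then 1 - p else p)) := by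
      rw [Fin.prod_univ_add]
      simp [Fin.appendEquiv, Fin.append_left, Fin.append_right]
    rw [hofn, hw, wp_append]
  rw [key]
  have step : ∀ (u : Fin m → Bool) (v : Fin n → Bool),
      ((∏ i : Fin m, (if u i then 1 - p else p)) * (∏ i : Fin n, (if v i then 1 - p else p))) *
          Real.log (opNorm (wp (List.ofFn u) * wp (List.ofFn v))) ≤
      ((∏ i : Fin m, (if u i then 1 - p else p)) * (∏ i : Fin n, (if v i then 1 - p else p))) *
        (Real.log (opNorm (wp (List.ofFn u))) + Real.log (opNorm (wp (List.ofFn v)))) := by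
    intro u v
    apply mul_le_mul_of_nonneg_left _ (mul_nonneg (weight_nonneg h0 h1 u) (weight_nonneg h0 h1 v))
    calc Real.log (opNorm (wp (List.ofFn u) * wp (List.ofFn v)))
        ≤ Real.log (opNorm (wp (List.ofFn u)) * opNorm (wp (List.ofFn v))) := by
          apply Real.log_le_log _ (opNorm_mul_le _ _)
          rw [← wp_append]; exact opNorm_wp_pos _
      _ = _ := Real.log_mul (ne_of_gt (opNorm_wp_pos _)) (ne_of_gt (opNorm_wp_pos _))
  calc (∑ u : Fin m → Bool, ∑ v : Fin n → Bool,
        ((∏ i : Fin m, (if u i then 1 - p else p)) * (∏ i : Fin n, (if v i then 1 - p else p))) *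
          Real.log (opNorm (wp (List.ofFn u) * wp (List.ofFn v))))
      ≤ ∑ u : Fin m → Bool, ∑ v : Fin n → Bool,
        ((∏ i : Fin m, (if u i then 1 - p else p)) * (∏ i : Fin n, (if v i then 1 - p else p))) *
          (Real.log (opNorm (wp (List.ofFn u))) + Real.log (opNorm (wp (List.ofFn v)))) :=
        Finset.sum_le_sum fun u _ => Finset.sum_le_sum fun v _ => step u v
    _ = expLogNorm m p + expLogNorm n p := by
        rw [expLogNorm_eq, expLogNorm_eq]
        exact sum_mul_add _ _ _ _ (weight_sum m p) (weight_sum n p)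

lemma expLogNorm_zero (p : ℝ) : expLogNorm 0 p = 0 := by
  have h1 : opNorm (1 : Matrix (Fin 2) (Fin 2) ℝ) = 1 := by
    unfold opNorm; rw [_root_.map_one]; exact ContinuousLinearMap.norm_id
  haveI : Unique (Fin 0 → Bool) :=
    ⟨⟨fun _ => false⟩, fun f => funext fun i => i.elim0⟩
  rw [expLogNorm_eq, Fintype.sum_unique]
  simp [wp, h1]

lemma expLogNorm_mul (n k : ℕ) {p : ℝ} (h0 : 0 ≤ p) (h1 : p ≤ 1) :
    expLogNorm (n * k) p ≤ k * expLogNorm n p := by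
  induction k with
  | zero => simp [expLogNorm_zero]
  | succ k ih =>
    have hnk : n * (k + 1) = n * k + n := by ring
    rw [hnk]
    calc expLogNorm (n * k + n) p ≤ expLogNorm (n * k) p + expLogNorm n p :=
          expLogNorm_add _ _ h0 h1
      _ ≤ k * expLogNorm n p + expLogNorm n p := by linarith
      _ = ((k + 1 : ℕ) : ℝ) * expLogNorm n p := by push_cast; ring

lemma phi_le (p L : ℝ) (h0 : 0 ≤ p) (h1 : p ≤ 1) (n : ℕ) (hn : 0 < n)
    (ht : Filter.Tendsto (fun k : ℕ => expLogNorm k p / k) Filter.atTop (nhds L)) :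
    L ≤ expLogNorm n p / n := by
  have hcomp : Filter.Tendsto (fun k : ℕ => expLogNorm (n * k) p / ((n * k : ℕ) : ℝ))
      Filter.atTop (nhds L) :=
    ht.comp (tendsto_atTop_mono (fun k => Nat.le_mul_of_pos_left k hn) tendsto_id)
  refine le_of_tendsto hcomp ?_
  filter_upwards [eventually_ge_atTop 1] with k hk
  have hmul := expLogNorm_mul n k h0 h1
  have hnR : (0 : ℝ) < n := by exact_mod_cast hn
  have hkR : (0 : ℝ) < (k : ℝ) := by exact_mod_cast hk
  have hnkR : (0 : ℝ) < ((n * k : ℕ) : ℝ) := by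
    exact_mod_cast Nat.mul_pos hn hk
  rw [div_le_div_iff₀ hnkR hnR]
  push_cast
  nlinarith [hmul, hnR, hkR]

lemma list_a (n : ℕ) : (List.replicate n aMat).prod = !![1, (n : ℝ); 0, 1] := by
  induction n with
  | zero => simp [Matrix.one_fin_two]
  | succ n ih =>
    rw [List.replicate_succ, List.prod_cons, ih, aMat, Matrix.mul_fin_two]
    push_cast
    norm_num

lemma wp_false (n : ℕ) : wp (List.ofFn (fun _ : Fin n => false)) = !![1, (n : ℝ); 0, 1] := by
  rw [wp, List.ofFn_const, List.map_replicate]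
  simpa using list_a n

lemma opNorm_An (n : ℕ) : opNorm !![1, (n : ℝ); 0, 1] ≤ (n : ℝ) + 2 := by
  unfold opNorm
  apply ContinuousLinearMap.opNorm_le_bound _ (by positivity)
  intro x
  rw [norm_sq, norm_sq]
  rw [coord_apply, coord_apply]
  have e00 : (!![1, (n : ℝ); 0, 1]) 0 0 = 1 := by norm_num
  have e01 : (!![1, (n : ℝ); 0, 1]) 0 1 = (n : ℝ) := by norm_num
  have e10 : (!![1, (n : ℝ); 0, 1]) 1 0 = 0 := by norm_num
  have e11 : (!![1, (n : ℝ); 0, 1]) 1 1 = 1 := by norm_num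
  rw [e00, e01, e10, e11]
  have hn : (0 : ℝ) ≤ n := n.cast_nonneg
  have hkey : (1 * x 0 + (n : ℝ) * x 1) ^ 2 + (0 * x 0 + 1 * x 1) ^ 2
      ≤ ((n : ℝ) + 2) ^ 2 * (x 0 ^ 2 + x 1 ^ 2) := by
    nlinarith [sq_nonneg (x 0 - x 1), sq_nonneg (x 0 + x 1), sq_nonneg (x 0), sq_nonneg (x 1),
      mul_nonneg hn (sq_nonneg (x 0 - x 1)), mul_nonneg hn (sq_nonneg (x 0)),
      mul_nonneg hn (sq_nonneg (x 1)), mul_nonneg (mul_nonneg hn hn) (sq_nonneg (x 0)),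
      mul_nonneg (mul_nonneg hn hn) (sq_nonneg (x 1))]
  calc Real.sqrt ((1 * x 0 + (n : ℝ) * x 1) ^ 2 + (0 * x 0 + 1 * x 1) ^ 2)
      ≤ Real.sqrt (((n : ℝ) + 2) ^ 2 * (x 0 ^ 2 + x 1 ^ 2)) := Real.sqrt_le_sqrt hkey
    _ = ((n : ℝ) + 2) * Real.sqrt (x 0 ^ 2 + x 1 ^ 2) := by
        rw [Real.sqrt_mul (sq_nonneg _), Real.sqrt_sq (by positivity)]

lemma expLogNorm_one_eval (n : ℕ) :
    expLogNorm n 1 = Real.log (opNorm !![1, (n : ℝ); 0, 1]) := by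
  rw [expLogNorm_eq]
  rw [Finset.sum_eq_single (fun _ : Fin n => false)]
  · rw [wp_false]; simp
  · intro w _ hw
    obtain ⟨i, hi⟩ := Function.ne_iff.mp hw
    apply mul_eq_zero_of_left
    apply Finset.prod_eq_zero (Finset.mem_univ i)
    have hwi : w i = true := by
      cases hwib : w i
      · exact absurd hwib hi
      · rfl
    simp [hwi]
  · intro h
    exact absurd (Finset.mem_univ _) h

lemma log_div_tendsto : Filter.Tendsto (fun n : ℕ => Real.log ((n : ℝ) + 2) / (n : ℝ))
    Filter.atTop (nhds 0) := by
  have t0 : Filter.Tendsto (fun x : ℝ => Real.log x / x) Filter.atTop (nhds 0) :=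
    Real.isLittleO_log_id_atTop.tendsto_div_nhds_zero
  have t1 : Filter.Tendsto (fun n : ℕ => Real.log ((n : ℝ) + 2) / ((n : ℝ) + 2))
      Filter.atTop (nhds 0) :=
    t0.comp (Filter.tendsto_atTop_add_const_right _ 2 tendsto_natCast_atTop_atTop)
  have t2 : Filter.Tendsto (fun n : ℕ => ((n : ℝ) + 2) / (n : ℝ)) Filter.atTop (nhds 1) := by
    have h2 : Filter.Tendsto (fun n : ℕ => 1 + 2 / (n : ℝ)) Filter.atTop (nhds (1 + 0)) :=
      tendsto_const_nhds.add (tendsto_const_div_atTop_nhds_zero_nat 2)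
    rw [add_zero] at h2
    refine Filter.Tendsto.congr' ?_ h2
    filter_upwards [Filter.eventually_ge_atTop 1] with m hm
    have hm0 : (m : ℝ) ≠ 0 := by
      have : (0 : ℝ) < m := by exact_mod_cast hm
      exact ne_of_gt this
    field_simp
  have t3 := t1.mul t2
  rw [zero_mul] at t3
  refine Filter.Tendsto.congr' ?_ t3
  filter_upwards [Filter.eventually_ge_atTop 1] with m hm
  have hm0 : (m : ℝ) ≠ 0 := by
    have : (0 : ℝ) < m := by exact_mod_cast hm
    exact ne_of_gt this
  have hm2 : (m : ℝ) + 2 ≠ 0 := by positivity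
  field_simp

end LyapAux

/-- The top Lyapunov exponent `λ₁(μ_p) = lim (1/n) E[log‖X_n⋯X_1‖]` of the i.i.d. random
products with law `μ_p` tends to `0` as `p → 1⁻` (within `(0,1)`). -/
theorem lyapunov_tendsto_zero (φ : ℝ → ℝ)
    (hφ : ∀ p : ℝ, 0 < p → p < 1 →
      Filter.Tendsto (fun n : ℕ => expLogNorm n p / n) Filter.atTop (nhds (φ p))) :
    Filter.Tendsto φ (nhdsWithin 1 (Set.Ioo (0 : ℝ) 1)) (nhds 0) := by
  rw [Metric.tendsto_nhds]
  intro ε hε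
  have hev : ∀ᶠ n : ℕ in Filter.atTop,
      Real.log ((n : ℝ) + 2) / (n : ℝ) < ε :=
    LyapAux.log_div_tendsto.eventually_lt_const hε
  obtain ⟨n, hn⟩ := (hev.and (Filter.eventually_ge_atTop 1)).exists
  obtain ⟨hnε, hn1⟩ := hn
  have hn0 : 0 < n := hn1
  have hnR : (0 : ℝ) < n := by exact_mod_cast hn0
  set F : ℝ → ℝ := fun p => expLogNorm n p / n with hF
  have hFcont : Continuous F := by
    apply Continuous.div_const
    unfold expLogNorm
    apply continuous_finset_sum
    intro w _
    apply Continuous.mul _ continuous_const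
    apply continuous_finset_prod
    intro i _
    cases w i
    · simpa using continuous_id'
    · exact ((continuous_const (y := (1 : ℝ))).sub continuous_id').congr fun a => by simp
  have hF1 : F 1 < ε := by
    have hle : expLogNorm n 1 ≤ Real.log ((n : ℝ) + 2) := by
      rw [LyapAux.expLogNorm_one_eval]
      apply Real.log_le_log _ (LyapAux.opNorm_An n)
      rw [← LyapAux.wp_false n]
      exact LyapAux.opNorm_wp_pos _
    calc F 1 = expLogNorm n 1 / n := rfl
      _ ≤ Real.log ((n : ℝ) + 2) / n := by gcongr
      _ < ε := hnε
  have hevF : ∀ᶠ p in nhdsWithin 1 (Set.Ioo (0 : ℝ) 1), F p < ε :=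
    ((hFcont.tendsto 1).eventually_lt_const hF1).filter_mono nhdsWithin_le_nhds
  filter_upwards [hevF, self_mem_nhdsWithin] with p hFp hp
  obtain ⟨hp0, hp1⟩ := hp
  have hφ0 : 0 ≤ φ p := by
    refine ge_of_tendsto (hφ p hp0 hp1) ?_
    filter_upwards with k
    exact div_nonneg (LyapAux.expLogNorm_nonneg k hp0.le hp1.le) (Nat.cast_nonneg k)
  have hub : φ p ≤ F p := LyapAux.phi_le p (φ p) hp0.le hp1.le n hn0 (hφ p hp0 hp1)
  rw [Real.dist_eq, sub_zero, abs_of_nonneg hφ0]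
  exact lt_of_le_of_lt hub hFp
end
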